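/- Let γ ∈ (0,1) be irrational. The characteristic Sturmian word c_γ is generated by a standard morphism (i.e. c_γ = ψ^ω(c) for some standard morphism ψ and some letter c ∈ {a,b}) if and only if γ is a Sturm number. -/

import Mathlib

/-- The two-letter alphabet 𝒜 = {a, b}. -/
inductive AB : Type
  | a : AB
  | b : AB
deriving DecidableEq, Repr

/-- Apply a morphism (determined by its images on the letters) to a finite word. -/
def applyM (g : AB → List AB) (w : List AB) : List AB := w.flatMap g

/-- The exchange morphism E : a ↦ b, b ↦ a. -/
def Em : AB → List AB
  | AB.a => [AB.b]
  | AB.b => [AB.a]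

/-- The morphism φ : a ↦ ab, b ↦ a. -/
def phim : AB → List AB
  | AB.a => [AB.a, AB.b]
  | AB.b => [AB.a]

/-- Composition of morphisms: `compM g h` applies `h` first, then `g`. -/
def compM (g h : AB → List AB) : AB → List AB := fun c => applyM g (h c)

/-- Powers of a morphism. -/
def mpow (g : AB → List AB) : ℕ → AB → List AB
  | 0 => fun c => [c]
  | n + 1 => compM g (mpow g n)

/-- A morphism is standard iff it is a composition of E and φ (in any number and order). -/
inductive IsStandard : (AB → List AB) → Prop
  | id : IsStandard (fun c => [c])
  | compE {ψ : AB → List AB} : IsStandard ψ → IsStandard (compM ψ Em)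
  | compPhi {ψ : AB → List AB} : IsStandard ψ → IsStandard (compM ψ phim)

/-- `IsRightConj ψ ξ k` : ξ is the k-th right conjugate of ψ, i.e. there is a word u
of length k with ψ(w)u = uξ(w) for all finite words w. -/
def IsRightConj (ψ ξ : AB → List AB) (k : ℕ) : Prop :=
  ∃ u : List AB, u.length = k ∧ ∀ w : List AB, applyM ψ w ++ u = u ++ applyM ξ w

/-- w^k (power of a finite word under concatenation). -/
def lpow (w : List AB) : ℕ → List AB
  | 0 => []
  | k + 1 => w ++ lpow w k

/-- Standard sequence associated with a directive sequence (d₁, d₂, …) (here `d`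
is indexed so that `d i` is dᵢ for i ≥ 1): `sseq d 0 = s₋₁ = b`, `sseq d (n+1) = sₙ`,
with s₀ = a and sₙ = sₙ₋₁^{dₙ} sₙ₋₂. -/
def sseq (d : ℕ → ℕ) : ℕ → List AB
  | 0 => [AB.b]
  | 1 => [AB.a]
  | n + 2 => lpow (sseq d (n + 1)) (d (n + 1)) ++ sseq d n

/-- Convergent denominators: `qseq d n` = qₙ = |sₙ| (q₀ = 1, q₁ = 1 + d₁,
qₙ = dₙqₙ₋₁ + qₙ₋₂). -/
def qseq (d : ℕ → ℕ) : ℕ → ℕ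
  | 0 => 1
  | 1 => 1 + d 1
  | n + 2 => d (n + 2) * qseq d (n + 1) + qseq d n

/-- `PrefInf u x` : the finite word u is a prefix of the infinite word x. -/
def PrefInf (u : List AB) (x : ℕ → AB) : Prop :=
  ∀ i, i < u.length → u.getD i AB.a = x i

/-- Image of an infinite word under a (non-erasing) morphism, letter by letter. -/
def applyInf (g : AB → List AB) (x : ℕ → AB) : ℕ → AB :=
  fun i => (applyM g ((List.range (i + 1)).map x)).getD i AB.a

/-- `IsProdInf u x` : the infinite word x is the infinite product u 0 · u 1 · u 2 ⋯,
i.e. every finite partial product is a prefix of x. -/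
def IsProdInf (u : ℕ → List AB) (x : ℕ → AB) : Prop :=
  ∀ n, PrefInf (((List.range n).map u).flatten) x

/-- Adjoining singular words: `vword d k` is the adjoining singular word v_{k-1}
(so `vword d 0 = v₋₁`), where vₙ = a·sₙ₊₁^{d_{n+2}−1}sₙ·b⁻¹ for n odd and
vₙ = b·sₙ₊₁^{d_{n+2}−1}sₙ·a⁻¹ for n even. -/
def vword (d : ℕ → ℕ) (k : ℕ) : List AB :=
  (if k % 2 = 0 then AB.a else AB.b) ::
    (lpow (sseq d (k + 1)) (d (k + 1) - 1) ++ sseq d k).dropLast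

/-- Singular words: `wword d k` is the singular word w_{k-2}
(w₋₂ = ε, w₋₁ = a, w₀ = b, and wₙ = a·sₙ·b⁻¹ for n ≥ 1 odd, wₙ = b·sₙ·a⁻¹ for n even). -/
def wword (d : ℕ → ℕ) : ℕ → List AB
  | 0 => []
  | 1 => [AB.a]
  | 2 => [AB.b]
  | k + 3 =>
      (if (k + 1) % 2 = 1 then AB.a else AB.b) :: (sseq d (k + 2)).dropLast

/-- The standard morphism σ associated with a type (i) Sturm number
α = [0;1+d₁,\overline{d₂,…,dₙ}] : σ(a) = sₙ₋₁, σ(b) = sₙ₋₁^{dₙ−d₁} sₙ₋₂. -/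
def sigmaGen (d : ℕ → ℕ) (n : ℕ) : AB → List AB
  | AB.a => sseq d n
  | AB.b => lpow (sseq d n) (d n - d 1) ++ sseq d (n - 1)

/-- The directive sequence of α = [0;2,\overline{r}] : d₁ = 1, dᵢ = r for i ≥ 2. -/
def dseq (r : ℕ) : ℕ → ℕ := fun i => if i ≤ 1 then 1 else r

/-- The directive sequence of 1 − α = [0;1,d₁,\overline{d₂,…,dₙ}] obtained from that of
α = [0;1+d₁,\overline{d₂,…,dₙ}] : ê₁ = 0 and êᵢ = dᵢ₋₁ for i ≥ 2. -/
def dhat (d : ℕ → ℕ) : ℕ → ℕ := fun i => if i ≤ 1 then 0 else d (i - 1)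

/-- `Generates ψ c x` : ψ is prolongable on the letter c and x = ψ^ω(c), i.e. every
ψ^m(c) is a prefix of x. -/
def Generates (ψ : AB → List AB) (c : AB) (x : ℕ → AB) : Prop :=
  (∃ w : List AB, w ≠ [] ∧ ψ c = c :: w) ∧ ∀ m, PrefInf (mpow ψ m c) x

/-- Fibonacci numbers, shifted: `fibw k = F_{k-1}`, so fibw 0 = F₋₁ = 1,
fibw 1 = F₀ = 1, Fₙ = Fₙ₋₁ + Fₙ₋₂. -/
def fibw : ℕ → ℕ
  | 0 => 1
  | 1 => 1
  | n + 2 => fibw (n + 1) + fibw n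

/-- `HasCF γ a` : γ has continued fraction expansion [0; a 1, a 2, a 3, …]. -/
def HasCF (γ : ℝ) (a : ℕ → ℕ) : Prop :=
  ∃ x : ℕ → ℝ, x 0 = γ ∧ (∀ i, 0 < x i ∧ x i < 1) ∧
    ∀ i, 1 / x i = (a (i + 1) : ℝ) + x (i + 1)

/-- γ has a continued fraction expansion of type (i):
γ = [0;1+d₁,\overline{d₂,…,dₙ}] < 1/2 with dₙ ≥ d₁ ≥ 1. -/
def CFTypeI (γ : ℝ) : Prop :=
  ∃ a : ℕ → ℕ, HasCF γ a ∧ γ < 1 / 2 ∧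
    ∃ n : ℕ, 2 ≤ n ∧ ∃ d : ℕ → ℕ,
      (∀ i, 1 ≤ i → 1 ≤ d i) ∧ a 1 = 1 + d 1 ∧ (∀ i, 2 ≤ i → a i = d i) ∧
      (∀ i, 2 ≤ i → d (i + (n - 1)) = d i) ∧ d 1 ≤ d n

/-- γ has a continued fraction expansion of type (ii):
γ = [0;1,d₁,\overline{d₂,…,dₙ}] > 1/2 with dₙ ≥ d₁. -/
def CFTypeII (γ : ℝ) : Prop :=
  ∃ a : ℕ → ℕ, HasCF γ a ∧ 1 / 2 < γ ∧
    ∃ n : ℕ, 2 ≤ n ∧ ∃ d : ℕ → ℕ,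
      (∀ i, 1 ≤ i → 1 ≤ d i) ∧ a 1 = 1 ∧ (∀ i, 2 ≤ i → a i = d (i - 1)) ∧
      (∀ i, 2 ≤ i → d (i + (n - 1)) = d i) ∧ d 1 ≤ d n

/-- A Sturm number: an irrational γ ∈ (0,1) whose continued fraction expansion is of
type (i) or type (ii). -/
def IsSturmNumber (γ : ℝ) : Prop :=
  Irrational γ ∧ 0 < γ ∧ γ < 1 ∧ (CFTypeI γ ∨ CFTypeII γ)

section Aux

open List

/-! ### Basic lemmas about applyM, compM, lpow -/

lemma applyM_nil (g : AB → List AB) : applyM g [] = [] := rfl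

lemma applyM_cons (g : AB → List AB) (c : AB) (w : List AB) :
    applyM g (c :: w) = g c ++ applyM g w := rfl

lemma applyM_singleton (g : AB → List AB) (c : AB) : applyM g [c] = g c := by
  simp [applyM]

lemma applyM_append (g : AB → List AB) (u v : List AB) :
    applyM g (u ++ v) = applyM g u ++ applyM g v := by
  simp [applyM]

lemma applyM_compM (g h : AB → List AB) (w : List AB) :
    applyM (compM g h) w = applyM g (applyM h w) := by
  induction w with
  | nil => rfl
  | cons c w ih => simp [applyM_cons, compM, ih, applyM_append]

lemma compM_assoc (f g h : AB → List AB) :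
    compM (compM f g) h = compM f (compM g h) := by
  funext c
  simp [compM, applyM_compM]

lemma compM_id_left (g : AB → List AB) : compM (fun c => [c]) g = g := by
  funext c
  simp [compM, applyM]

lemma compM_id_right (g : AB → List AB) : compM g (fun c => [c]) = g := by
  funext c
  simp [compM, applyM_singleton]

lemma lpow_add (w : List AB) (j k : ℕ) : lpow w (j + k) = lpow w j ++ lpow w k := by
  induction j with
  | zero => simp [lpow]
  | succ j ih =>
      have : j + 1 + k = (j + k) + 1 := by ring
      rw [this, lpow, lpow, ih, append_assoc]

lemma lpow_comm (w : List AB) (k : ℕ) : w ++ lpow w k = lpow w k ++ w := by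
  have h1 : lpow w (1 + k) = lpow w (k + 1) := by rw [Nat.add_comm]
  rw [lpow_add, lpow_add] at h1
  simpa [lpow] using h1

lemma applyM_lpow (g : AB → List AB) (w : List AB) (k : ℕ) :
    applyM g (lpow w k) = lpow (applyM g w) k := by
  induction k with
  | zero => rfl
  | succ k ih => rw [lpow, applyM_append, ih, lpow]

lemma lpow_singleton (c : AB) (k : ℕ) : lpow [c] k = List.replicate k c := by
  induction k with
  | zero => rfl
  | succ k ih => rw [lpow, ih, List.replicate_succ]; rfl

lemma length_lpow (w : List AB) (k : ℕ) : (lpow w k).length = k * w.length := by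
  induction k with
  | zero => simp [lpow]
  | succ k ih => rw [lpow]; simp [ih]; ring

end Aux
/-! ### The morphisms μ_e and G^t -/

/-- identity morphism -/
def idm : AB → List AB := fun c => [c]

/-- G^t : a ↦ a, b ↦ a^t b. -/
def Gm (t : ℕ) : AB → List AB
  | AB.a => [AB.a]
  | AB.b => List.replicate t AB.a ++ [AB.b]

/-- μ_e : a ↦ a^e b, b ↦ a. -/
def mu (e : ℕ) : AB → List AB
  | AB.a => List.replicate e AB.a ++ [AB.b]
  | AB.b => [AB.a]

lemma applyM_replicate (g : AB → List AB) (k : ℕ) (c : AB) :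
    applyM g (List.replicate k c) = lpow (g c) k := by
  induction k with
  | zero => rfl
  | succ k ih => rw [List.replicate_succ, applyM_cons, ih, lpow]

lemma mu_zero : mu 0 = Em := by
  funext c; cases c <;> rfl

lemma Gm_zero : Gm 0 = idm := by
  funext c; cases c <;> rfl

lemma compM_Em_Em : compM Em Em = idm := by
  funext c; cases c <;> rfl

lemma compM_Gm_Gm (s t : ℕ) : compM (Gm s) (Gm t) = Gm (s + t) := by
  funext c; cases c with
  | a => rfl
  | b =>
      show applyM (Gm s) (List.replicate t AB.a ++ [AB.b]) = _
      rw [applyM_append, applyM_replicate, applyM_singleton]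
      show lpow [AB.a] t ++ (List.replicate s AB.a ++ [AB.b]) = Gm (s+t) AB.b
      rw [lpow_singleton]
      show _ = List.replicate (s+t) AB.a ++ [AB.b]
      rw [Nat.add_comm s t, List.replicate_add, List.append_assoc]

lemma compM_Gm_mu (k g : ℕ) : compM (Gm k) (mu g) = mu (k + g) := by
  funext c; cases c with
  | b => rfl
  | a =>
      show applyM (Gm k) (List.replicate g AB.a ++ [AB.b]) = _
      rw [applyM_append, applyM_replicate, applyM_singleton]
      show lpow [AB.a] g ++ (List.replicate k AB.a ++ [AB.b]) = mu (k+g) AB.a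
      rw [lpow_singleton]
      show _ = List.replicate (k+g) AB.a ++ [AB.b]
      rw [Nat.add_comm k g, List.replicate_add, List.append_assoc]

lemma compM_mu_Em (g : ℕ) : compM (mu g) Em = Gm g := by
  funext c; cases c with
  | a => rfl
  | b => show applyM (mu g) [AB.a] = _; rw [applyM_singleton]; rfl

lemma compM_Gm_phim (t : ℕ) : compM (Gm t) phim = mu (t + 1) := by
  funext c; cases c with
  | b => rfl
  | a =>
      show applyM (Gm t) [AB.a, AB.b] = _
      show [AB.a] ++ applyM (Gm t) [AB.b] = _
      rw [applyM_singleton]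
      show [AB.a] ++ (List.replicate t AB.a ++ [AB.b]) = List.replicate (t+1) AB.a ++ [AB.b]
      rw [Nat.add_comm t 1, List.replicate_add, List.append_assoc]
      rfl

/-- Composition μ_{d(s+1)} ∘ μ_{d(s+2)} ∘ ⋯ ∘ μ_{d(s+k)}. -/
def MwFrom (d : ℕ → ℕ) : ℕ → ℕ → (AB → List AB)
  | _, 0 => idm
  | s, (k+1) => compM (mu (d (s+1))) (MwFrom d (s+1) k)

lemma MwFrom_snoc (d : ℕ → ℕ) (s k : ℕ) :
    MwFrom d s (k+1) = compM (MwFrom d s k) (mu (d (s+k+1))) := by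
  induction k generalizing s with
  | zero =>
      show compM (mu (d (s+1))) idm = compM idm (mu (d (s+0+1)))
      unfold idm
      rw [compM_id_right, compM_id_left]
  | succ k ih =>
      show compM (mu (d (s+1))) (MwFrom d (s+1) (k+1)) = _
      rw [ih (s+1)]
      show _ = compM (compM (mu (d (s+1))) (MwFrom d (s+1) k)) (mu (d (s+(k+1)+1)))
      rw [compM_assoc, show s+(k+1)+1 = (s+1)+k+1 by omega]

lemma MwFrom_congr (d d' : ℕ → ℕ) (s s' k : ℕ)
    (h : ∀ i, 1 ≤ i → i ≤ k → d (s + i) = d' (s' + i)) :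
    MwFrom d s k = MwFrom d' s' k := by
  induction k generalizing s s' with
  | zero => rfl
  | succ k ih =>
      show compM (mu (d (s+1))) (MwFrom d (s+1) k) = compM (mu (d' (s'+1))) (MwFrom d' (s'+1) k)
      rw [h 1 le_rfl (by omega)]
      rw [ih (s+1) (s'+1) (fun i h1 h2 => by
        have := h (i+1) (by omega) (by omega)
        simpa [Nat.add_assoc, Nat.add_comm 1 i] using this)]

lemma MwFrom_add (d : ℕ → ℕ) (s j k : ℕ) :
    compM (MwFrom d s j) (MwFrom d (s + j) k) = MwFrom d s (j + k) := by
  induction j generalizing s with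
  | zero =>
      show compM idm (MwFrom d (s+0) k) = MwFrom d s (0+k)
      unfold idm
      rw [compM_id_left, Nat.add_zero, Nat.zero_add]
  | succ j ih =>
      show compM (compM (mu (d (s+1))) (MwFrom d (s+1) j)) (MwFrom d (s+(j+1)) k)
        = MwFrom d s (j+1+k)
      rw [compM_assoc, show s + (j+1) = (s+1) + j by omega, ih (s+1),
        show j+1+k = (j+k)+1 by omega]
      rfl
/-! ### sseq lemmas -/

lemma sseq_congr (d d' : ℕ → ℕ) (k : ℕ) (h : ∀ i, 1 ≤ i → i < k → d i = d' i) :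
    sseq d k = sseq d' k := by
  induction k using Nat.strong_induction_on with
  | _ k ih =>
      match k with
      | 0 => rfl
      | 1 => rfl
      | (n+2) =>
          show lpow (sseq d (n+1)) (d (n+1)) ++ sseq d n = lpow (sseq d' (n+1)) (d' (n+1)) ++ sseq d' n
          rw [h (n+1) (by omega) (by omega),
            ih (n+1) (by omega) (fun i h1 h2 => h i h1 (by omega)),
            ih n (by omega) (fun i h1 h2 => h i h1 (by omega))]

lemma sseq_ne_nil (d : ℕ → ℕ) (k : ℕ) : sseq d k ≠ [] := by
  match k with
  | 0 => simp [sseq]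
  | 1 => simp [sseq]
  | (n+2) =>
      show lpow (sseq d (n+1)) (d (n+1)) ++ sseq d n ≠ []
      simp [sseq_ne_nil d n]

lemma sseq_one (d : ℕ → ℕ) : sseq d 1 = [AB.a] := rfl

lemma sseq_two (d : ℕ → ℕ) : sseq d 2 = List.replicate (d 1) AB.a ++ [AB.b] := by
  show lpow (sseq d 1) (d 1) ++ sseq d 0 = _
  rw [sseq_one, lpow_singleton]
  rfl

lemma sseq_prefix_succ (d : ℕ → ℕ) (hd : ∀ i, 1 ≤ i → 1 ≤ d i) (k : ℕ) (hk : 1 ≤ k) :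
    sseq d k <+: sseq d (k + 1) := by
  match k, hk with
  | (n+1), _ =>
      show sseq d (n+1) <+: lpow (sseq d (n+1)) (d (n+1)) ++ sseq d n
      have h1 : 1 ≤ d (n+1) := hd (n+1) (by omega)
      obtain ⟨m, hm⟩ : ∃ m, d (n+1) = m + 1 := ⟨d (n+1) - 1, by omega⟩
      rw [hm, lpow, List.append_assoc]
      exact List.prefix_append _ _

lemma sseq_prefix (d : ℕ → ℕ) (hd : ∀ i, 1 ≤ i → 1 ≤ d i) (j k : ℕ) (hj : 1 ≤ j)
    (hjk : j ≤ k) : sseq d j <+: sseq d k := by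
  induction k with
  | zero => omega
  | succ k ih =>
      rcases Nat.lt_or_ge j (k+1) with h | h
      · exact (ih (by omega)).trans (sseq_prefix_succ d hd k (by omega))
      · have : j = k + 1 := by omega
        rw [this]

lemma sseq_head (d : ℕ → ℕ) (hd : ∀ i, 1 ≤ i → 1 ≤ d i) (k : ℕ) :
    [AB.a] <+: sseq d (k + 1) := by
  have := sseq_prefix d hd 1 (k+1) le_rfl (by omega)
  rwa [sseq_one] at this

lemma length_sseq_pos (d : ℕ → ℕ) (k : ℕ) : 0 < (sseq d k).length :=
  List.length_pos_iff.mpr (sseq_ne_nil d k)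

lemma length_sseq_ge (d : ℕ → ℕ) (hd : ∀ i, 1 ≤ i → 1 ≤ d i) (k : ℕ) :
    k ≤ (sseq d (k + 1)).length := by
  induction k with
  | zero => simp
  | succ k ih =>
      show k + 1 ≤ (lpow (sseq d (k+1)) (d (k+1)) ++ sseq d k).length
      rw [List.length_append, length_lpow]
      have h1 : 1 ≤ d (k+1) := hd (k+1) (by omega)
      have h2 := length_sseq_pos d k
      have h3 := length_sseq_pos d (k+1)
      calc k + 1 ≤ (sseq d (k+1)).length + 1 := by omega
        _ ≤ d (k+1) * (sseq d (k+1)).length + (sseq d k).length := by nlinarith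

/-- the fundamental non-commutation: s_{k-1} s_k ≠ s_k s_{k-1}. -/
lemma sseq_noncomm (d : ℕ → ℕ) (hd : ∀ i, 1 ≤ i → 1 ≤ d i) (k : ℕ) :
    sseq d k ++ sseq d (k + 1) ≠ sseq d (k + 1) ++ sseq d k := by
  induction k with
  | zero =>
      show [AB.b] ++ sseq d 1 ≠ sseq d 1 ++ [AB.b]
      rw [sseq_one]
      simp
  | succ k ih =>
      intro h
      apply ih
      have hs2 : sseq d (k+2) = lpow (sseq d (k+1)) (d (k+1)) ++ sseq d k := rfl
      rw [hs2] at h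
      have h1 : 1 ≤ d (k+1) := hd (k+1) (by omega)
      obtain ⟨m, hm⟩ : ∃ m, d (k+1) = m + 1 := ⟨d (k+1) - 1, by omega⟩
      rw [hm, lpow] at h
      -- h : S ++ (S ++ P ++ T) = S ++ P ++ T ++ S  with P = lpow S m
      set S := sseq d (k+1) with hS
      set T := sseq d k with hT
      set P := lpow S m with hPdef
      have hP : S ++ P = P ++ S := lpow_comm S m
      have h2 : (S ++ P) ++ (S ++ T) = (S ++ P) ++ (T ++ S) := by
        calc (S ++ P) ++ (S ++ T) = S ++ (P ++ S) ++ T := by simp [List.append_assoc]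
          _ = S ++ (S ++ P) ++ T := by rw [← hP]
          _ = S ++ (S ++ P ++ T) := by simp [List.append_assoc]
          _ = S ++ P ++ T ++ S := h
          _ = (S ++ P) ++ (T ++ S) := by simp [List.append_assoc]
      exact (List.append_cancel_left h2).symm

/-! ### MwFrom and sseq -/

lemma MwFrom_words (d : ℕ → ℕ) (k : ℕ) :
    applyM (MwFrom d 0 k) [AB.a] = sseq d (k + 1) ∧
    applyM (MwFrom d 0 k) [AB.b] = sseq d k := by
  induction k with
  | zero => constructor <;> rfl
  | succ k ih =>
      rw [MwFrom_snoc]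
      constructor
      · rw [applyM_singleton]
        show applyM (MwFrom d 0 k) (List.replicate (d (0+k+1)) AB.a ++ [AB.b]) = _
        rw [applyM_append, applyM_replicate,
          ← applyM_singleton (MwFrom d 0 k) AB.a,
          ih.1, ih.2, Nat.zero_add]
        rfl
      · rw [applyM_singleton]
        show applyM (MwFrom d 0 k) (mu (d (0+k+1)) AB.b) = _
        show applyM (MwFrom d 0 k) [AB.a] = _
        rw [ih.1]
/-! ### PrefInf lemmas -/

lemma prefInf_mono {u v : List AB} {x : ℕ → AB} (hv : PrefInf v x) (huv : u <+: v) :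
    PrefInf u x := by
  intro i hi
  have hlen : u.length ≤ v.length := huv.length_le
  rw [List.getD_eq_getElem u AB.a hi, huv.getElem hi]
  have := hv i (by omega)
  rwa [List.getD_eq_getElem v AB.a (by omega)] at this

lemma prefInf_compare {u v : List AB} {x : ℕ → AB} (hu : PrefInf u x) (hv : PrefInf v x)
    (h : u.length ≤ v.length) : u <+: v := by
  have : u = v.take u.length := by
    apply List.ext_getElem
    · simp [h]
    · intro i h1 h2
      rw [List.getElem_take]
      have e1 := hu i (by omega)
      have e2 := hv i (by omega)
      rw [List.getD_eq_getElem u AB.a (by omega)] at e1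
      rw [List.getD_eq_getElem v AB.a (by omega)] at e2
      rw [e1, e2]
  rw [this]
  exact List.take_prefix _ _

lemma prefInf_extract {u v w : List AB} {x : ℕ → AB} (hv : PrefInf (u ++ v) x)
    (hw : PrefInf (u ++ w) x) (h : v.length = w.length) : v = w := by
  apply List.ext_getElem h
  intro i h1 h2
  have e1 := hv (u.length + i) (by simp; omega)
  have e2 := hw (u.length + i) (by simp; omega)
  rw [List.getD_eq_getElem _ AB.a (by simp; omega)] at e1
  rw [List.getD_eq_getElem _ AB.a (by simp; omega)] at e2
  rw [List.getElem_append_right (by omega)] at e1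
  rw [List.getElem_append_right (by omega)] at e2
  simp only [Nat.add_sub_cancel_left] at e1 e2
  rw [e1, e2]

lemma prefInf_head {c : AB} {w : List AB} {x : ℕ → AB} (h : PrefInf (c :: w) x) :
    x 0 = c := by
  have := h 0 (by simp)
  simpa using this.symm

/-! ### Non-erasing morphisms -/

def NonEr (g : AB → List AB) : Prop := ∀ ch : AB, g ch ≠ []

lemma applyM_ne_nil {g : AB → List AB} (hg : NonEr g) {w : List AB} (hw : w ≠ []) :
    applyM g w ≠ [] := by
  cases w with
  | nil => exact absurd rfl hw
  | cons c w => rw [applyM_cons]; simp [hg c]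

lemma length_applyM_ge {g : AB → List AB} (hg : NonEr g) (w : List AB) :
    w.length ≤ (applyM g w).length := by
  induction w with
  | nil => simp [applyM_nil]
  | cons c w ih =>
      rw [applyM_cons, List.length_append]
      have : 1 ≤ (g c).length := by
        have := hg c
        cases hgc : g c with
        | nil => exact absurd hgc this
        | cons _ _ => simp
      simp only [List.length_cons]
      omega

lemma isStandard_nonEr {ψ : AB → List AB} (h : IsStandard ψ) : NonEr ψ := by
  induction h with
  | id => intro c; simp
  | compE h ih =>
      intro c
      show applyM _ (Em c) ≠ []
      apply applyM_ne_nil ih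
      cases c <;> simp [Em]
  | compPhi h ih =>
      intro c
      show applyM _ (phim c) ≠ []
      apply applyM_ne_nil ih
      cases c <;> simp [phim]

lemma nonEr_mpow {ψ : AB → List AB} (h : NonEr ψ) (m : ℕ) : NonEr (mpow ψ m) := by
  induction m with
  | zero => intro c; simp [mpow]
  | succ m ih =>
      intro c
      show applyM ψ (mpow ψ m c) ≠ []
      exact applyM_ne_nil h (ih c)

lemma mpow_comm (ψ : AB → List AB) (m : ℕ) :
    compM ψ (mpow ψ m) = compM (mpow ψ m) ψ := by
  induction m with
  | zero =>
      show compM ψ (fun c => [c]) = compM (fun c => [c]) ψ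
      rw [compM_id_left, compM_id_right]
  | succ m ih =>
      show compM ψ (compM ψ (mpow ψ m)) = compM (compM ψ (mpow ψ m)) ψ
      calc compM ψ (compM ψ (mpow ψ m)) = compM ψ (compM (mpow ψ m) ψ) := by rw [ih]
        _ = compM (compM ψ (mpow ψ m)) ψ := by rw [compM_assoc]

lemma mpow_succ_apply (ψ : AB → List AB) (m : ℕ) (c : AB) :
    mpow ψ (m+1) c = applyM ψ (mpow ψ m c) := rfl

/-- length growth for a prolongable morphism -/
lemma mpow_length {ψ : AB → List AB} (hne : NonEr ψ) {w : List AB} (hw : w ≠ [])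
    (hpr : ψ AB.a = AB.a :: w) (m : ℕ) : m + 1 ≤ (mpow ψ m AB.a).length := by
  induction m with
  | zero => simp [mpow]
  | succ m ih =>
      have key : mpow ψ (m+1) AB.a = mpow ψ m AB.a ++ applyM (mpow ψ m) w := by
        have h1 : mpow ψ (m+1) AB.a = applyM (mpow ψ m) (ψ AB.a) := by
          show compM ψ (mpow ψ m) AB.a = _
          rw [mpow_comm]
          rfl
        rw [h1, hpr, applyM_cons]
      rw [key, List.length_append]
      have h2 : applyM (mpow ψ m) w ≠ [] := applyM_ne_nil (nonEr_mpow hne m) hw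
      have h3 : 1 ≤ (applyM (mpow ψ m) w).length := by
        cases hx : applyM (mpow ψ m) w with
        | nil => exact absurd hx h2
        | cons _ _ => simp
      omega
/-! ### Uniqueness of the directive sequence -/

lemma prefix_append_of_prefix {u v : List AB} (w : List AB) (h : u <+: v) : u <+: v ++ w := by
  obtain ⟨t, ht⟩ := h
  exact ⟨t ++ w, by rw [← ht, List.append_assoc]⟩

lemma append_prefix_append (u : List AB) {v w : List AB} (h : v <+: w) : u ++ v <+: u ++ w := by
  obtain ⟨t, ht⟩ := h
  exact ⟨t, by rw [← ht, List.append_assoc]⟩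

lemma getD_rep_last (k : ℕ) : (List.replicate k AB.a ++ [AB.b]).getD k AB.a = AB.b := by
  rw [List.getD_eq_getElem _ _ (by simp)]
  rw [List.getElem_append_right (by simp)]
  simp

lemma getD_rep_mid (k j : ℕ) (h : j < k) :
    (List.replicate k AB.a ++ [AB.b]).getD j AB.a = AB.a := by
  rw [List.getD_eq_getElem _ _ (by simp; omega)]
  rw [List.getElem_append_left (by simpa using h)]
  simp

lemma uniqAux (d d' : ℕ → ℕ) (x : ℕ → AB)
    (hd : ∀ i, 1 ≤ i → 1 ≤ d i) (hd' : ∀ i, 1 ≤ i → 1 ≤ d' i)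
    (hx : ∀ k, PrefInf (sseq d (k + 1)) x) (hx' : ∀ k, PrefInf (sseq d' (k + 1)) x)
    (m : ℕ) (hm : 1 ≤ m) (heq : ∀ j, 1 ≤ j → j < m → d j = d' j)
    (hlt : d m < d' m) : False := by
  have hs : ∀ j, j ≤ m → sseq d j = sseq d' j := by
    intro j hj
    exact sseq_congr d d' j (fun i h1 h2 => heq i h1 (by omega))
  match m, hm with
  | 1, _ =>
      have p1 := hx 1
      have p2 := hx' 1
      rw [sseq_two] at p1 p2
      have e1 := p1 (d 1) (by simp)
      have e2 := p2 (d 1) (by simp; omega)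
      rw [getD_rep_last] at e1
      rw [getD_rep_mid _ _ hlt] at e2
      rw [← e1] at e2
      exact AB.noConfusion e2
  | (r+2), _ =>
      set S := sseq d (r+2) with hS
      set T := sseq d (r+1) with hT
      set U := lpow S (d (r+2)) with hU
      have hdm : 1 ≤ d (r+2) := hd _ (by omega)
      have hdm' : 1 ≤ d (r+3) := hd _ (by omega)
      have hTS : T <+: S := by
        rw [hS, hT]; exact sseq_prefix d hd (r+1) (r+2) (by omega) (by omega)
      have hSU : S <+: U := by
        rw [hU]
        obtain ⟨m', hm'⟩ : ∃ m', d (r+2) = m' + 1 := ⟨d (r+2) - 1, by omega⟩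
        rw [hm', lpow]
        exact List.prefix_append _ _
      -- first prefix : U ++ (T ++ S) is a prefix of x
      have P1 : PrefInf (U ++ (T ++ S)) x := by
        apply prefInf_mono (hx (r+3))
        have h34 : sseq d (r+4) = lpow (U ++ T) (d (r+3)) ++ S := rfl
        obtain ⟨e', he'⟩ : ∃ e', d (r+3) = e' + 1 := ⟨d (r+3) - 1, by omega⟩
        rw [h34, he', lpow, List.append_assoc, ← List.append_assoc U T]
        apply append_prefix_append
        cases e' with
        | zero => simp [lpow]
        | succ e'' =>
            rw [lpow, List.append_assoc]
            apply prefix_append_of_prefix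
            exact hSU.trans (prefix_append_of_prefix _ (List.prefix_refl U))
      -- second prefix : U ++ (S ++ T) is a prefix of x
      have P2 : PrefInf (U ++ (S ++ T)) x := by
        apply prefInf_mono (hx' (r+2))
        have h3' : sseq d' (r+3) = lpow (sseq d' (r+2)) (d' (r+2)) ++ sseq d' (r+1) := rfl
        rw [h3', ← hs (r+2) (by omega), ← hs (r+1) (by omega), ← hS, ← hT]
        obtain ⟨s, hsdef⟩ : ∃ s, d' (r+2) = d (r+2) + 1 + s := ⟨d' (r+2) - d (r+2) - 1, by omega⟩
        rw [hsdef, lpow_add, lpow_add, ← hU]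
        rw [List.append_assoc, List.append_assoc]
        apply append_prefix_append
        have hl1 : lpow S 1 = S ++ [] := rfl
        rw [hl1, List.append_nil]
        apply append_prefix_append
        cases s with
        | zero => simp [lpow]
        | succ s' =>
            rw [lpow, List.append_assoc]
            exact hTS.trans (prefix_append_of_prefix _ (List.prefix_refl S))
      have hlen : (T ++ S).length = (S ++ T).length := by
        simp [List.length_append]; omega
      have :  T ++ S = S ++ T := prefInf_extract P1 P2 hlen
      exact sseq_noncomm d hd (r+1) this

lemma directive_unique (d d' : ℕ → ℕ) (x : ℕ → AB)
    (hd : ∀ i, 1 ≤ i → 1 ≤ d i) (hd' : ∀ i, 1 ≤ i → 1 ≤ d' i)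
    (hx : ∀ k, PrefInf (sseq d (k + 1)) x) (hx' : ∀ k, PrefInf (sseq d' (k + 1)) x) :
    ∀ i, 1 ≤ i → d i = d' i := by
  intro i
  induction i using Nat.strong_induction_on with
  | _ i ih =>
      intro hi
      by_contra hne
      rcases Nat.lt_or_ge (d i) (d' i) with h | h
      · exact uniqAux d d' x hd hd' hx hx' i hi (fun j h1 h2 => ih j h2 h1) h
      · exact uniqAux d' d x hd' hd hx' hx i hi (fun j h1 h2 => (ih j h2 h1).symm) (by omega)
/-! ### Normal form of standard morphisms : ψ = E^ε ∘ μ_{f1}⋯μ_{fq} ∘ G^t with all fᵢ ≥ 1 -/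

lemma compM_Gm_Em (t : ℕ) : compM (Gm t) Em = mu t := by
  funext c; cases c with
  | a => show applyM (Gm t) [AB.b] = _; rw [applyM_singleton]; rfl
  | b => show applyM (Gm t) [AB.a] = _; rw [applyM_singleton]; rfl

lemma idm_eq_body : (fun c : AB => [c]) = compM (MwFrom (fun _ => 0) 0 0) (Gm 0) := by
  rw [Gm_zero]
  show idm = compM idm idm
  unfold idm
  rw [compM_id_left]

lemma standard_nf {ψ : AB → List AB} (h : IsStandard ψ) :
    ∃ (q t : ℕ) (f : ℕ → ℕ), (∀ i, 1 ≤ i → i ≤ q → 1 ≤ f i) ∧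
      (ψ = compM (MwFrom f 0 q) (Gm t) ∨ ψ = compM Em (compM (MwFrom f 0 q) (Gm t))) := by
  induction h with
  | id =>
      exact ⟨0, 0, fun _ => 0, fun i h1 h2 => by omega, Or.inl idm_eq_body⟩
  | @compE ψ h ih =>
      obtain ⟨q, t, f, hf, hcase⟩ := ih
      have key : ∀ ψ₀, ψ₀ = compM (MwFrom f 0 q) (Gm t) →
          ∃ (q' t' : ℕ) (f' : ℕ → ℕ), (∀ i, 1 ≤ i → i ≤ q' → 1 ≤ f' i) ∧
            (compM ψ₀ Em = compM (MwFrom f' 0 q') (Gm t') ∨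
             compM ψ₀ Em = compM Em (compM (MwFrom f' 0 q') (Gm t'))) := by
        intro ψ₀ hψ₀
        subst hψ₀
        rw [compM_assoc]
        cases t with
        | succ t' =>
            refine ⟨q+1, 0, fun i => if i = q+1 then t'+1 else f i, ?_, Or.inl ?_⟩
            · intro i h1 h2
              by_cases hi : i = q+1 <;> simp [hi]
              exact hf i h1 (by omega)
            · rw [compM_Gm_Em, MwFrom_snoc]
              have : MwFrom f 0 q = MwFrom (fun i => if i = q+1 then t'+1 else f i) 0 q := by
                apply MwFrom_congr
                intro i h1 h2
                simp only [Nat.zero_add]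
                rw [if_neg (by omega : ¬ i = q + 1)]
              rw [this, Gm_zero]
              show compM _ (mu (t'+1)) = compM (compM _ (mu (if 0+q+1 = q+1 then t'+1 else f (0+q+1)))) idm
              unfold idm
              rw [compM_id_right]
              simp
        | zero =>
            rw [Gm_zero]
            have : compM idm Em = Em := by unfold idm; rw [compM_id_left]
            rw [this]
            cases q with
            | zero =>
                refine ⟨0, 0, fun _ => 0, fun i h1 h2 => by omega, Or.inr ?_⟩
                show compM idm Em = _
                unfold idm
                rw [compM_id_left, ← idm_eq_body]
                show Em = compM Em idm
                unfold idm
                rw [compM_id_right]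
            | succ q' =>
                refine ⟨q', f (q'+1), f, fun i h1 h2 => hf i h1 (by omega), Or.inl ?_⟩
                rw [MwFrom_snoc, compM_assoc, compM_mu_Em]
                simp
      rcases hcase with hψ | hψ
      · exact key ψ hψ
      · obtain ⟨q', t', f', hf', hc⟩ := key (compM (MwFrom f 0 q) (Gm t)) rfl
        rw [hψ, compM_assoc]
        rcases hc with h2 | h2
        · exact ⟨q', t', f', hf', Or.inr (by rw [h2])⟩
        · refine ⟨q', t', f', hf', Or.inl ?_⟩
          rw [h2, ← compM_assoc, compM_Em_Em]
          unfold idm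
          rw [compM_id_left]
  | @compPhi ψ h ih =>
      obtain ⟨q, t, f, hf, hcase⟩ := ih
      have key : compM (compM (MwFrom f 0 q) (Gm t)) phim
          = compM (MwFrom (fun i => if i = q+1 then t+1 else f i) 0 (q+1)) (Gm 0) := by
        rw [compM_assoc, compM_Gm_phim, MwFrom_snoc]
        have : MwFrom f 0 q = MwFrom (fun i => if i = q+1 then t+1 else f i) 0 q := by
          apply MwFrom_congr
          intro i h1 h2
          simp only [Nat.zero_add]
          rw [if_neg (by omega : ¬ i = q + 1)]
        rw [this, Gm_zero]
        show compM _ (mu (t+1)) = compM (compM _ (mu (if 0+q+1 = q+1 then t+1 else f (0+q+1)))) idm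
        unfold idm
        rw [compM_id_right]
        simp
      have hfnew : ∀ i, 1 ≤ i → i ≤ q+1 → 1 ≤ (fun i => if i = q+1 then t+1 else f i) i := by
        intro i h1 h2
        by_cases hi : i = q+1 <;> simp [hi]
        exact hf i h1 (by omega)
      rcases hcase with hψ | hψ
      · exact ⟨q+1, 0, _, hfnew, Or.inl (by rw [hψ, key])⟩
      · exact ⟨q+1, 0, _, hfnew, Or.inr (by rw [hψ, compM_assoc, key])⟩
/-! ### Standardness of the building blocks -/

lemma isStandard_compM {f g : AB → List AB} (hf : IsStandard f) (hg : IsStandard g) :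
    IsStandard (compM f g) := by
  induction hg with
  | id =>
      have : compM f (fun c => [c]) = f := compM_id_right f
      rw [this]; exact hf
  | compE h ih =>
      rw [← compM_assoc]
      exact IsStandard.compE ih
  | compPhi h ih =>
      rw [← compM_assoc]
      exact IsStandard.compPhi ih

lemma isStandard_Em : IsStandard Em := by
  have := IsStandard.compE IsStandard.id
  rwa [compM_id_left] at this

lemma isStandard_phim : IsStandard phim := by
  have := IsStandard.compPhi IsStandard.id
  rwa [compM_id_left] at this

lemma Gm_one : Gm 1 = compM phim Em := by
  funext c; cases c <;> rfl

lemma isStandard_Gm (t : ℕ) : IsStandard (Gm t) := by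
  induction t with
  | zero => rw [Gm_zero]; exact IsStandard.id
  | succ t ih =>
      have : Gm (t+1) = compM (Gm t) (Gm 1) := (compM_Gm_Gm t 1).symm
      rw [this, Gm_one]
      exact isStandard_compM ih (IsStandard.compE isStandard_phim)

lemma isStandard_mu (e : ℕ) : IsStandard (mu e) := by
  rw [← compM_Gm_Em]
  exact IsStandard.compE (isStandard_Gm e)

lemma isStandard_MwFrom (d : ℕ → ℕ) (s k : ℕ) : IsStandard (MwFrom d s k) := by
  induction k generalizing s with
  | zero => exact IsStandard.id
  | succ k ih => exact isStandard_compM (isStandard_mu _) (ih (s+1))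

/-! ### Key word computation -/

lemma body_word_a (f : ℕ → ℕ) (q t : ℕ) :
    applyM (compM (MwFrom f 0 q) (Gm t)) [AB.a] = sseq f (q + 1) := by
  rw [applyM_compM, applyM_singleton]
  show applyM (MwFrom f 0 q) [AB.a] = _
  exact (MwFrom_words f q).1

lemma comp_word (f e : ℕ → ℕ) (q t : ℕ) (hq1 : f (q + 1) = t + e 1)
    (hsh : ∀ j, 2 ≤ j → f (q + j) = e j) (k : ℕ) :
    applyM (compM (MwFrom f 0 q) (Gm t)) (sseq e (k + 1)) = sseq f (q + k + 1) := by
  cases k with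
  | zero => rw [sseq_one]; rw [body_word_a]
  | succ k' =>
      rw [← (MwFrom_words e (k'+1)).1, ← applyM_compM]
      have harg : MwFrom e 1 k' = MwFrom f (q+1) k' := by
        apply MwFrom_congr
        intro i h1 h2
        have := hsh (i+1) (by omega)
        rw [show q + (i+1) = q + 1 + i by omega] at this
        rw [show 1 + i = i + 1 by omega, this]
      have step1 : compM (Gm t) (MwFrom e 0 (k'+1)) = compM (mu (f (q+1))) (MwFrom f (q+1) k') := by
        show compM (Gm t) (compM (mu (e 1)) (MwFrom e 1 k')) = _
        rw [← compM_assoc, compM_Gm_mu, hq1, harg]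
      have step2 : compM (mu (f (q+1))) (MwFrom f (q+1) k') = MwFrom f q (k'+1) := rfl
      rw [show compM (compM (MwFrom f 0 q) (Gm t)) (MwFrom e 0 (k'+1))
          = compM (MwFrom f 0 q) (compM (Gm t) (MwFrom e 0 (k'+1))) from compM_assoc _ _ _]
      rw [step1, step2]
      have step3 : compM (MwFrom f 0 q) (MwFrom f q (k'+1)) = MwFrom f 0 (q + (k'+1)) := by
        have := MwFrom_add f 0 q (k'+1)
        simpa using this
      rw [step3]
      exact (MwFrom_words f (q + (k'+1))).1
/-! ### Continued fraction lemmas -/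

lemma hasCF_pos {γ : ℝ} {a : ℕ → ℕ} (h : HasCF γ a) : ∀ i, 1 ≤ i → 1 ≤ a i := by
  obtain ⟨x, hx0, hxb, hrec⟩ := h
  intro i hi
  obtain ⟨j, rfl⟩ : ∃ j, i = j + 1 := ⟨i - 1, by omega⟩
  by_contra hcon
  have ha0 : a (j+1) = 0 := by omega
  have h1 := hrec j
  rw [ha0] at h1
  have hb := hxb j
  have hb' := hxb (j+1)
  have : (1:ℝ) < 1 / x j := by
    rw [lt_div_iff₀ hb.1]
    linarith [hb.2]
  simp at h1
  rw [one_div] at this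
  linarith [hb'.2]

lemma hasCF_lt_half {γ : ℝ} {a : ℕ → ℕ} (h : HasCF γ a) (h2 : 2 ≤ a 1) (h0 : 0 < γ) :
    γ < 1 / 2 := by
  obtain ⟨x, hx0, hxb, hrec⟩ := h
  have h1 := hrec 0
  rw [hx0] at h1
  have hc : (2:ℝ) ≤ (a 1 : ℝ) := by exact_mod_cast h2
  have hgt : (2:ℝ) < 1 / γ := by linarith [(hxb 1).1]
  have : 2 * γ < 1 := by
    have := mul_lt_mul_of_pos_right hgt h0
    rwa [one_div_mul_cancel (ne_of_gt h0)] at this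
  linarith

lemma hasCF_a1_eq_one {γ : ℝ} {a : ℕ → ℕ} (h : HasCF γ a) (hg : 1 / 2 < γ) (h1 : γ < 1) :
    a 1 = 1 := by
  have hpos := hasCF_pos h 1 le_rfl
  obtain ⟨x, hx0, hxb, hrec⟩ := h
  have hr := hrec 0
  rw [hx0] at hr
  have h0 : (0:ℝ) < γ := by linarith
  have hlt : 1 / γ < 2 := by
    rw [div_lt_iff₀ h0]
    linarith
  have : (a 1 : ℝ) < 2 := by linarith [(hxb 1).1]
  have : a 1 < 2 := by exact_mod_cast this
  omega

lemma hasCF_unique {γ : ℝ} {a b : ℕ → ℕ} (ha : HasCF γ a) (hb : HasCF γ b) :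
    ∀ i, 1 ≤ i → a i = b i := by
  obtain ⟨x, hx0, hxb, hrecx⟩ := ha
  obtain ⟨y, hy0, hyb, hrecy⟩ := hb
  have key : ∀ i, x i = y i := by
    intro i
    induction i with
    | zero => rw [hx0, hy0]
    | succ i ih =>
        have h := hrecx i
        have h' := hrecy i
        rw [ih] at h
        have hE : (a (i+1):ℝ) + x (i+1) = (b (i+1):ℝ) + y (i+1) := h.symm.trans h'
        have hab : a (i+1) = b (i+1) := by
          have h1 : (a (i+1):ℝ) < (b (i+1):ℝ) + 1 := by
            linarith [(hxb (i+1)).1, (hyb (i+1)).2]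
          have h2 : (b (i+1):ℝ) < (a (i+1):ℝ) + 1 := by
            linarith [(hyb (i+1)).1, (hxb (i+1)).2]
          have h1' : a (i+1) < b (i+1) + 1 := by exact_mod_cast h1
          have h2' : b (i+1) < a (i+1) + 1 := by exact_mod_cast h2
          omega
        have : (a (i+1):ℝ) = (b (i+1):ℝ) := by exact_mod_cast hab
        linarith
  intro i hi
  obtain ⟨j, rfl⟩ : ∃ j, i = j + 1 := ⟨i - 1, by omega⟩
  have h := hrecx j
  have h' := hrecy j
  rw [key j] at h
  have hE : (a (j+1):ℝ) + x (j+1) = (b (j+1):ℝ) + y (j+1) := h.symm.trans h'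
  have h1 : (a (j+1):ℝ) < (b (j+1):ℝ) + 1 := by
    linarith [(hxb (j+1)).1, (hyb (j+1)).2]
  have h2 : (b (j+1):ℝ) < (a (j+1):ℝ) + 1 := by
    linarith [(hyb (j+1)).1, (hxb (j+1)).2]
  have h1' : a (j+1) < b (j+1) + 1 := by exact_mod_cast h1
  have h2' : b (j+1) < a (j+1) + 1 := by exact_mod_cast h2
  omega
/-- For an irrational γ ∈ (0,1) with continued fraction expansion
[0;a₁,a₂,…] (so that the directive sequence of c_γ is (a₁ − 1, a₂, a₃, …)), the
characteristic Sturmian word c_γ is generated by a standard morphism if and only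
if γ is a Sturm number. -/
theorem statement10 (γ : ℝ) (hirr : Irrational γ) (h0 : 0 < γ) (h1 : γ < 1)
    (a : ℕ → ℕ) (ha : HasCF γ a)
    (c : ℕ → AB)
    (hc : ∀ k, PrefInf (sseq (fun i => if i ≤ 1 then a 1 - 1 else a i) (k + 1)) c) :
    (∃ ψ : AB → List AB, ∃ l : AB, IsStandard ψ ∧ Generates ψ l c) ↔
      IsSturmNumber γ := by
  set e : ℕ → ℕ := fun i => if i ≤ 1 then a 1 - 1 else a i with he
  have ha1 : 1 ≤ a 1 := hasCF_pos ha 1 le_rfl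
  have hc0 : c 0 = AB.a := by
    have h := hc 0
    rw [sseq_one] at h
    exact prefInf_head h
  by_cases ha2 : 2 ≤ a 1
  case neg =>
    exfalso
    have he1 : e 1 = 0 := by simp [he]; omega
    have h2 := hc 1
    rw [sseq_two, he1] at h2
    simp only [List.replicate_zero, List.nil_append] at h2
    have := prefInf_head h2
    rw [hc0] at this
    exact AB.noConfusion this
  have he1 : e 1 = a 1 - 1 := by simp [he]
  have he2 : ∀ i, 2 ≤ i → e i = a i := by
    intro i hi; simp [he, show ¬ i ≤ 1 by omega]
  have hei : ∀ i, 1 ≤ i → 1 ≤ e i := by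
    intro i hi
    rcases Nat.lt_or_ge i 2 with h | h
    · have : i = 1 := by omega
      rw [this, he1]; omega
    · rw [he2 i h]; exact hasCF_pos ha i (by omega)
  constructor
  · rintro ⟨ψ, l, hst, hgen⟩
    have hl : l = AB.a := by
      have h := hgen.2 0
      have : PrefInf [l] c := h
      rw [← prefInf_head this, hc0]
    subst hl
    obtain ⟨w, hw, hpr⟩ := hgen.1
    have hne := isStandard_nonEr hst
    have htrans : ∀ u, PrefInf u c → PrefInf (applyM ψ u) c := by
      intro u hu
      have hlen : u.length ≤ (mpow ψ u.length AB.a).length := by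
        have := mpow_length hne hw hpr u.length; omega
      obtain ⟨v, hv⟩ := prefInf_compare hu (hgen.2 u.length) hlen
      have himg : applyM ψ u <+: mpow ψ (u.length + 1) AB.a := by
        rw [mpow_succ_apply, ← hv, applyM_append]
        exact List.prefix_append _ _
      exact prefInf_mono (hgen.2 (u.length + 1)) himg
    obtain ⟨q, t, f, hf, hform | hform⟩ := standard_nf hst
    · rcases Nat.eq_zero_or_pos q with hq | hq
      · exfalso
        subst hq
        have hid : ψ AB.a = [AB.a] := by
          rw [hform]
          show applyM (MwFrom f 0 0) (Gm t AB.a) = [AB.a]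
          rfl
        rw [hpr] at hid
        simp at hid
        exact hw hid
      · -- main case
        set F : ℕ → ℕ := fun i => if i ≤ q then f i else if i = q+1 then t + e 1 else e (i - q)
          with hF
        have hFge : ∀ i, 1 ≤ i → 1 ≤ F i := by
          intro i hi
          rcases Nat.lt_or_ge q i with h | h
          · rcases Nat.eq_or_lt_of_le h with h' | h'
            · simp [hF, show ¬ i ≤ q by omega, show i = q + 1 by omega]
              have := hei 1 le_rfl; omega
            · simp [hF, show ¬ i ≤ q by omega, show ¬ i = q + 1 by omega]
              exact hei (i - q) (by omega)
          · simp [hF, show i ≤ q by omega]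
            exact hf i hi h
        have hMF : MwFrom f 0 q = MwFrom F 0 q := by
          apply MwFrom_congr
          intro i h1 h2
          simp only [hF, Nat.zero_add]
          rw [if_pos h2]
        have hkey : ∀ k, applyM ψ (sseq e (k+1)) = sseq F (q+k+1) := by
          intro k
          rw [hform, hMF]
          apply comp_word
          · simp [hF, show ¬ q + 1 ≤ q by omega]
          · intro j hj
            simp [hF, show ¬ q + j ≤ q by omega, show ¬ q + j = q + 1 by omega,
              show q + j - q = j by omega, show ¬ j = 1 by omega]
        have hFpref : ∀ k, PrefInf (sseq F (k+1)) c := by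
          intro k
          have big := htrans _ (hc k)
          rw [hkey k] at big
          exact prefInf_mono big (sseq_prefix F hFge (k+1) (q+k+1) (by omega) (by omega))
        have huniq := directive_unique e F c hei hFge hc hFpref
        refine ⟨hirr, h0, h1, Or.inl ⟨a, ha, hasCF_lt_half ha ha2 h0, q+1, by omega, e,
          hei, by rw [he1]; omega, fun i hi => (he2 i hi).symm, ?_, ?_⟩⟩
        · intro i hi
          have h1' := huniq (i + (q+1-1)) (by omega)
          rw [show q + 1 - 1 = q from rfl] at h1' ⊢
          rw [h1']
          simp [hF, show ¬ i + q ≤ q by omega, show ¬ i + q = q + 1 by omega,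
            show i + q - q = i by omega]
        · have h1' := huniq (q+1) (by omega)
          have hFq : F (q+1) = t + e 1 := by
            simp [hF]
          rw [h1', hFq]
          omega
    · -- ψ = Em ∘ body : impossible since c starts with a
      exfalso
      have hword : applyM ψ [AB.a] = applyM Em (sseq f (q+1)) := by
        rw [hform, applyM_compM, body_word_a]
      have hhead : ∃ r, sseq f (q+1) = AB.a :: r := by
        set f' : ℕ → ℕ := fun i => if i ≤ q then f i else 1 with hf'
        have hcong : sseq f (q+1) = sseq f' (q+1) := by
          apply sseq_congr
          intro i hi1 hi2
          simp [hf', show i ≤ q by omega]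
        have hge : ∀ i, 1 ≤ i → 1 ≤ f' i := by
          intro i hi
          by_cases h : i ≤ q
          · simp [hf', h]; exact hf i hi h
          · simp [hf', h]
        obtain ⟨r, hr⟩ := sseq_head f' hge q
        exact ⟨r, by rw [hcong, ← hr]; rfl⟩
      obtain ⟨r, hr⟩ := hhead
      have hp : PrefInf (applyM ψ [AB.a]) c := by
        apply htrans
        have := hc 0
        rwa [sseq_one] at this
      rw [hword, hr] at hp
      have hp2 : PrefInf (AB.b :: applyM Em r) c := hp
      have := prefInf_head hp2
      rw [hc0] at this
      exact AB.noConfusion this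
  · rintro ⟨-, -, -, hI | hII⟩
    · obtain ⟨a', ha', hhalf, n, hn, d, hd1, had, ha2d, hper, hdn⟩ := hI
      have haa : ∀ i, 1 ≤ i → a' i = a i := hasCF_unique ha' ha
      have hde : ∀ i, 1 ≤ i → d i = e i := by
        intro i hi
        rcases Nat.lt_or_ge i 2 with h | h
        · have hi1 : i = 1 := by omega
          subst hi1
          have := haa 1 le_rfl
          rw [he1]
          omega
        · rw [he2 i h, ← haa i (by omega), ha2d i h]
      have hcd : ∀ k, PrefInf (sseq d (k+1)) c := by
        intro k
        rw [sseq_congr d e (k+1) (fun i h1 h2 => hde i h1)]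
        exact hc k
      set ψ := compM (MwFrom d 0 (n-1)) (Gm (d n - d 1)) with hψ
      have hcomp : ∀ k, applyM ψ (sseq d (k+1)) = sseq d (k + n) := by
        intro k
        have hone : d ((n-1) + 1) = (d n - d 1) + d 1 := by
          rw [show n - 1 + 1 = n by omega]
          omega
        have htwo : ∀ j, 2 ≤ j → d ((n-1) + j) = d j := by
          intro j hj
          have := hper j hj
          rwa [show j + (n-1) = (n-1) + j by omega] at this
        have := comp_word d d (n-1) (d n - d 1) hone htwo k
        rw [hψ, this, show (n-1) + k + 1 = k + n by omega]
      have hmp : ∀ m, mpow ψ m AB.a = sseq d (m * (n-1) + 1) := by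
        intro m
        induction m with
        | zero => rw [Nat.zero_mul]; rfl
        | succ m ih =>
            rw [mpow_succ_apply, ih, hcomp (m * (n-1))]
            congr 1
            obtain ⟨p, rfl⟩ : ∃ p, n = p + 2 := ⟨n - 2, by omega⟩
            simp only [show p + 2 - 1 = p + 1 from rfl]
            ring
      have hψa : ψ AB.a = sseq d n := by
        have h := body_word_a d (n-1) (d n - d 1)
        rw [applyM_singleton] at h
        rw [hψ]
        rw [h, show n - 1 + 1 = n by omega]
      refine ⟨ψ, AB.a, isStandard_compM (isStandard_MwFrom d 0 (n-1)) (isStandard_Gm _),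
        ⟨?_, ?_⟩⟩
      · -- prolongable
        have hnpref : sseq d 2 <+: sseq d n := sseq_prefix d hd1 2 n (by omega) hn
        rw [sseq_two] at hnpref
        obtain ⟨p1, hp1⟩ : ∃ p1, d 1 = p1 + 1 := ⟨d 1 - 1, by have := hd1 1 le_rfl; omega⟩
        rw [hp1, List.replicate_succ] at hnpref
        obtain ⟨u, hu⟩ := hnpref
        refine ⟨List.replicate p1 AB.a ++ [AB.b] ++ u, by simp, ?_⟩
        rw [hψa, ← hu]
        simp
      · intro m
        rw [hmp m]
        exact hcd (m * (n-1))
    · exfalso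
      obtain ⟨a', ha', hhalf, -⟩ := hII
      have := hasCF_a1_eq_one ha hhalf h1
      omega
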